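/- For any chain p₁, p₂, …, p_m in a finite simple graph G, either the induced subgraph G[p₁, …, p_m] is connected, or p₁ is non-adjacent to p₂ and G[p₁, …, p_m] is isomorphic to the disjoint union of a single isolated vertex and a path on m − 1 vertices. -/

import Mathlib

namespace ChainAux

def eA (m : ℕ) (hm : 1 < m) : Fin m ≃ Fin 1 ⊕ Fin (m-1) where
  toFun k := if _ : (k:ℕ) = 0 then Sum.inl ⟨0, by omega⟩
    else Sum.inr ⟨(k:ℕ)-1, by have := k.isLt; omega⟩
  invFun x := Sum.elim (fun _ => ⟨0, by omega⟩)
    (fun (j : Fin (m-1)) => ⟨(j:ℕ)+1, by have := j.isLt; omega⟩) x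
  left_inv k := by
    dsimp only
    by_cases h : (k:ℕ) = 0
    · rw [dif_pos h]; exact Fin.ext (by simpa using h.symm)
    · rw [dif_neg h]; exact Fin.ext (by simp; omega)
  right_inv x := by
    rcases x with a | j
    · dsimp only [Sum.elim_inl]
      rw [dif_pos rfl]
      exact congrArg _ (Fin.ext (by omega))
    · dsimp only [Sum.elim_inr]
      rw [dif_neg (Nat.succ_ne_zero _)]
      exact congrArg _ (Fin.ext (by simp))

def eB (m : ℕ) (hm : 3 ≤ m) : Fin m ≃ Fin 1 ⊕ Fin (m-1) where
  toFun k := if _ : (k:ℕ) = 1 then Sum.inl ⟨0, by omega⟩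
    else if _ : (k:ℕ) = 0 then Sum.inr ⟨0, by omega⟩
    else Sum.inr ⟨(k:ℕ)-1, by have := k.isLt; omega⟩
  invFun x := Sum.elim (fun _ => ⟨1, by omega⟩)
    (fun (j : Fin (m-1)) => if _ : (j:ℕ) = 0 then ⟨0, by omega⟩
      else ⟨(j:ℕ)+1, by have := j.isLt; omega⟩) x
  left_inv k := by
    dsimp only
    by_cases h1 : (k:ℕ) = 1
    · rw [dif_pos h1, Sum.elim_inl]; exact Fin.ext (by simpa using h1.symm)
    · rw [dif_neg h1]
      by_cases h0 : (k:ℕ) = 0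
      · rw [dif_pos h0, Sum.elim_inr, dif_pos rfl]; exact Fin.ext (by simpa using h0.symm)
      · rw [dif_neg h0, Sum.elim_inr, dif_neg (show ¬((k:ℕ)-1 = 0) by omega)]
        exact Fin.ext (by simp; omega)
  right_inv x := by
    rcases x with a | j
    · dsimp only [Sum.elim_inl]
      rw [dif_pos rfl]
      exact congrArg _ (Fin.ext (by omega))
    · dsimp only [Sum.elim_inr]
      by_cases h0 : (j:ℕ) = 0
      · rw [dif_pos h0, dif_neg (by simp), dif_pos rfl]
        exact congrArg _ (Fin.ext (by simp [h0]))
      · rw [dif_neg h0, dif_neg (show ¬((j:ℕ)+1 = 1) by omega), dif_neg (Nat.succ_ne_zero _)]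
        exact congrArg _ (Fin.ext (by simp))

end ChainAux

/-- A chain in a simple graph (`0`-indexed). -/
def SimpleGraph.IsChainSeq {V : Type*} (G : SimpleGraph V) {m : ℕ} (p : Fin m → V) : Prop :=
  Function.Injective p ∧
  ∀ i : Fin m, 2 ≤ (i : ℕ) →
    (G.Adj (p i) (p ⟨(i : ℕ) - 1, by have := i.isLt; omega⟩) ∧
      ∀ j : Fin m, (j : ℕ) < (i : ℕ) - 1 → ¬ G.Adj (p i) (p j)) ∨
    (¬ G.Adj (p i) (p ⟨(i : ℕ) - 1, by have := i.isLt; omega⟩) ∧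
      ∀ j : Fin m, (j : ℕ) < (i : ℕ) - 1 → G.Adj (p i) (p j))

theorem chain_induce_connected_or_isolated_plus_path {V : Type*} [Fintype V]
    (G : SimpleGraph V) {m : ℕ} (hm : 2 ≤ m) (p : Fin m → V) (hp : G.IsChainSeq p) :
    (G.induce (Set.range p)).Connected ∨
      (¬ G.Adj (p ⟨0, by omega⟩) (p ⟨1, by omega⟩) ∧
        Nonempty ((G.induce (Set.range p)) ≃g
          ((⊥ : SimpleGraph (Fin 1)) ⊕g SimpleGraph.pathGraph (m - 1)))) := by
  classical
  obtain ⟨hinj, hchain⟩ := hp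
  have mem : ∀ k : Fin m, p k ∈ Set.range p := fun k => ⟨k, rfl⟩
  have adj' : ∀ a b : Fin m, G.Adj (p a) (p b) →
      (G.induce (Set.range p)).Adj ⟨p a, mem a⟩ ⟨p b, mem b⟩ := fun _ _ h => h
  have conn : ∀ i0 : Fin m,
      (∀ k : Fin m, (G.induce (Set.range p)).Reachable ⟨p i0, mem i0⟩ ⟨p k, mem k⟩) →
      (G.induce (Set.range p)).Connected := by
    intro i0 h
    rw [SimpleGraph.connected_iff]
    refine ⟨?_, ⟨⟨p i0, mem i0⟩⟩⟩
    rintro ⟨x, a, rfl⟩ ⟨y, b, rfl⟩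
    exact (h a).symm.trans (h b)
  by_cases hA01 : G.Adj (p ⟨0, by omega⟩) (p ⟨1, by omega⟩)
  · left
    have reach0 : ∀ n (hn : n < m),
        (G.induce (Set.range p)).Reachable ⟨p ⟨0, by omega⟩, mem _⟩ ⟨p ⟨n, hn⟩, mem _⟩ := by
      intro n
      induction n using Nat.strong_induction_on with
      | _ n ih =>
      intro hn
      match n, hn with
      | 0, hn => exact SimpleGraph.Reachable.refl _
      | 1, hn => exact (adj' _ _ hA01).reachable
      | (k+2), hn =>
        rcases hchain ⟨k+2, hn⟩ (Nat.le_add_left 2 k) with ⟨h1, _⟩ | ⟨_, h2⟩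
        · exact (ih (k+1) (by omega) (by omega)).trans (adj' _ _ h1.symm).reachable
        · exact (adj' ⟨0, by omega⟩ ⟨k+2, hn⟩
            (h2 ⟨0, by omega⟩ (show (0:ℕ) < k+1 by omega)).symm).reachable
    exact conn ⟨0, by omega⟩ (fun k => reach0 k.val k.isLt)
  · by_cases hEx : ∃ i : Fin m, 3 ≤ (i:ℕ) ∧
        (¬ G.Adj (p i) (p ⟨(i : ℕ) - 1, by have := i.isLt; omega⟩) ∧
          ∀ j : Fin m, (j : ℕ) < (i : ℕ) - 1 → G.Adj (p i) (p j))
    · left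
      obtain ⟨i0, hi3, _, hall⟩ := hEx
      have reach : ∀ n (hn : n < m),
          (G.induce (Set.range p)).Reachable ⟨p i0, mem i0⟩ ⟨p ⟨n, hn⟩, mem _⟩ := by
        intro n
        induction n using Nat.strong_induction_on with
        | _ n ih =>
        intro hn
        by_cases h1 : n < (i0:ℕ) - 1
        · exact ((adj' i0 ⟨n, hn⟩ (hall ⟨n, hn⟩ h1)).reachable)
        · by_cases h2 : n = (i0:ℕ)
          · have : (⟨n, hn⟩ : Fin m) = i0 := Fin.ext h2
            rw [this]
          · rcases hchain ⟨n, hn⟩ (show 2 ≤ n by omega) with ⟨ha, _⟩ | ⟨_, hb⟩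
            · exact (ih (n-1) (by omega) (by omega)).trans
                (adj' ⟨n-1, by omega⟩ ⟨n, hn⟩ ha.symm).reachable
            · exact (ih 0 (by omega) (by omega)).trans
                (adj' ⟨0, by omega⟩ ⟨n, hn⟩
                  (hb ⟨0, by omega⟩ (show (0:ℕ) < n - 1 by omega)).symm).reachable
      exact conn i0 (fun k => reach k.val k.isLt)
    · right
      refine ⟨hA01, ?_⟩
      push_neg at hEx
      have hA3 : ∀ i : Fin m, 3 ≤ (i:ℕ) →
          (G.Adj (p i) (p ⟨(i : ℕ) - 1, by have := i.isLt; omega⟩) ∧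
            ∀ j : Fin m, (j : ℕ) < (i : ℕ) - 1 → ¬ G.Adj (p i) (p j)) := by
        intro i hi
        rcases hchain i (by omega) with h | ⟨h1, h2⟩
        · exact h
        · obtain ⟨j, hj, hja⟩ := hEx i hi h1
          exact absurd (h2 j hj) hja
      have iso0 : (G.comap p) ≃g (G.induce (Set.range p)) :=
        ⟨Equiv.ofInjective p hinj, Iff.rfl⟩
      -- case A builder
      have buildA : (∀ i : Fin m, 2 ≤ (i:ℕ) →
          (G.Adj (p i) (p ⟨(i : ℕ) - 1, by have := i.isLt; omega⟩) ∧
            ∀ j : Fin m, (j : ℕ) < (i : ℕ) - 1 → ¬ G.Adj (p i) (p j))) →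
          Nonempty ((G.induce (Set.range p)) ≃g
            ((⊥ : SimpleGraph (Fin 1)) ⊕g SimpleGraph.pathGraph (m - 1))) := by
        intro hall2
        have charA : ∀ a b : Fin m, (a:ℕ) < (b:ℕ) →
            (G.Adj (p a) (p b) ↔ ((a:ℕ)+1 = (b:ℕ) ∧ 1 ≤ (a:ℕ))) := by
          intro a b hab
          rcases Nat.lt_or_ge (b:ℕ) 2 with hb | hb
          · have hb1 : b = ⟨1, by omega⟩ := Fin.ext (show (b:ℕ) = 1 by omega)
            have ha0 : a = ⟨0, by omega⟩ := Fin.ext (show (a:ℕ) = 0 by omega)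
            rw [hb1, ha0]
            constructor
            · intro h; exact absurd h hA01
            · rintro ⟨-, h2⟩; exact absurd h2 (Nat.not_succ_le_zero 0)
          · obtain ⟨h1, h2⟩ := hall2 b hb
            constructor
            · intro h
              rcases Nat.lt_or_ge (a:ℕ) ((b:ℕ)-1) with hlt | hge
              · exact absurd h.symm (h2 a hlt)
              · exact ⟨by omega, by omega⟩
            · rintro ⟨hab1, ha1⟩
              have : a = ⟨(b:ℕ)-1, by have := b.isLt; omega⟩ :=
                Fin.ext (show (a:ℕ) = (b:ℕ)-1 by omega)
              rw [this]; exact h1.symm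
        have main : ∀ a b : Fin m, (a:ℕ) < (b:ℕ) →
            (((⊥ : SimpleGraph (Fin 1)) ⊕g SimpleGraph.pathGraph (m - 1)).Adj
              (ChainAux.eA m hm a) (ChainAux.eA m hm b) ↔ G.Adj (p a) (p b)) := by
          intro a b hab
          rw [charA a b hab]
          by_cases ha : (a:ℕ) = 0 <;> by_cases hb : (b:ℕ) = 0 <;>
            simp [ChainAux.eA, ha, hb, SimpleGraph.pathGraph_adj] <;> omega
        have isoA : (G.comap p) ≃g
            ((⊥ : SimpleGraph (Fin 1)) ⊕g SimpleGraph.pathGraph (m - 1)) := by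
          refine ⟨ChainAux.eA m hm, ?_⟩
          intro a b
          rw [SimpleGraph.comap_adj]
          rcases Nat.lt_trichotomy (a:ℕ) (b:ℕ) with h | h | h
          · exact main a b h
          · have : a = b := Fin.ext h
            subst this
            simp
          · rw [G.adj_comm, SimpleGraph.adj_comm]
            exact main b a h
        exact ⟨iso0.symm.trans isoA⟩
      rcases Nat.lt_or_ge m 3 with hm3 | hm3
      · -- m = 2
        exact buildA (fun i hi => absurd i.isLt (by omega))
      · rcases hchain ⟨2, by omega⟩ (Nat.le_refl 2) with h2a | ⟨h2b1, h2b2⟩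
        · refine buildA ?_
          intro i hi
          by_cases h : (i:ℕ) = 2
          · have : i = ⟨2, by omega⟩ := Fin.ext h
            rw [this]; exact h2a
          · exact hA3 i (by omega)
        · -- case B
          have charB : ∀ a b : Fin m, (a:ℕ) < (b:ℕ) →
              (G.Adj (p a) (p b) ↔
                (((a:ℕ) = 0 ∧ (b:ℕ) = 2) ∨ (2 ≤ (a:ℕ) ∧ (a:ℕ)+1 = (b:ℕ)))) := by
            intro a b hab
            rcases Nat.lt_or_ge (b:ℕ) 3 with hb | hb
            · rcases Nat.lt_or_ge (b:ℕ) 2 with hb2 | hb2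
              · have hb1 : b = ⟨1, by omega⟩ := Fin.ext (show (b:ℕ) = 1 by omega)
                have ha0 : a = ⟨0, by omega⟩ := Fin.ext (show (a:ℕ) = 0 by omega)
                rw [hb1, ha0]
                constructor
                · intro h; exact absurd h hA01
                · intro h; omega
              · -- b = 2
                have hbe : b = ⟨2, by omega⟩ := Fin.ext (show (b:ℕ) = 2 by omega)
                rcases Nat.lt_or_ge (a:ℕ) 1 with ha1 | ha1
                · have hae : a = ⟨0, by omega⟩ := Fin.ext (show (a:ℕ) = 0 by omega)
                  rw [hbe, hae]
                  constructor
                  · intro _; left; constructor <;> omega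
                  · intro _
                    exact (h2b2 ⟨0, by omega⟩ (show (0:ℕ) < 1 by omega)).symm
                · have hae : a = ⟨1, by omega⟩ := Fin.ext (show (a:ℕ) = 1 by omega)
                  rw [hbe, hae]
                  constructor
                  · intro h; exact absurd h.symm h2b1
                  · intro h; omega
            · obtain ⟨h1, h2⟩ := hA3 b hb
              constructor
              · intro h
                rcases Nat.lt_or_ge (a:ℕ) ((b:ℕ)-1) with hlt | hge
                · exact absurd h.symm (h2 a hlt)
                · right; constructor <;> omega
              · intro h
                have ha : (a:ℕ) = (b:ℕ) - 1 := by omega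
                have : a = ⟨(b:ℕ)-1, by have := b.isLt; omega⟩ := Fin.ext ha
                rw [this]; exact h1.symm
          have main : ∀ a b : Fin m, (a:ℕ) < (b:ℕ) →
              (((⊥ : SimpleGraph (Fin 1)) ⊕g SimpleGraph.pathGraph (m - 1)).Adj
                (ChainAux.eB m hm3 a) (ChainAux.eB m hm3 b) ↔ G.Adj (p a) (p b)) := by
            intro a b hab
            rw [charB a b hab]
            by_cases ha1 : (a:ℕ) = 1 <;> by_cases ha0 : (a:ℕ) = 0 <;>
              by_cases hb1 : (b:ℕ) = 1 <;> by_cases hb0 : (b:ℕ) = 0 <;>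
              simp [ChainAux.eB, ha1, ha0, hb1, hb0, SimpleGraph.pathGraph_adj] <;> omega
          have isoB : (G.comap p) ≃g
              ((⊥ : SimpleGraph (Fin 1)) ⊕g SimpleGraph.pathGraph (m - 1)) := by
            refine ⟨ChainAux.eB m hm3, ?_⟩
            intro a b
            rw [SimpleGraph.comap_adj]
            rcases Nat.lt_trichotomy (a:ℕ) (b:ℕ) with h | h | h
            · exact main a b h
            · have : a = b := Fin.ext h
              subst this
              simp
            · rw [G.adj_comm, SimpleGraph.adj_comm]
              exact main b a h
          exact ⟨iso0.symm.trans isoB⟩
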